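/- arXiv:1706.00292 — 4 statements merged into one kernel-verified Lean document; each statement's English description precedes it below -/
import Mathlib

section
/- As ε → 0⁺, the optimal value of the entropic regularized OT problem min_{P ∈ Π(a,b)} ⟨C,P⟩ + ε·H(P | a⊗b) converges to the unregularized optimal transport value min_{P ∈ Π(a,b)} ⟨C,P⟩. -/
open Finset Filter

def transportPolytope {n m : ℕ} (a : Fin n → ℝ) (b : Fin m → ℝ) :
    Set (Matrix (Fin n) (Fin m) ℝ) :=
  {P | (∀ i j, 0 ≤ P i j) ∧ (∀ i, ∑ j, P i j = a i) ∧ (∀ j, ∑ i, P i j = b j)}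

noncomputable def relEntropy {n m : ℕ} (P : Matrix (Fin n) (Fin m) ℝ) (a : Fin n → ℝ) (b : Fin m → ℝ) : ℝ :=
  ∑ i, ∑ j, P i j * Real.log (P i j / (a i * b j))

lemma aux_xlog {x c : ℝ} (hx0 : 0 ≤ x) (hx1 : x ≤ 1) (hc : 0 < c) :
    |x * Real.log (x / c)| ≤ 1 + |Real.log c| := by
  rcases eq_or_lt_of_le hx0 with h | h
  · simp [← h]
    positivity
  · rw [Real.log_div (ne_of_gt h) (ne_of_gt hc), mul_sub]
    have hlog : Real.log (1/x) ≤ 1/x - 1 := Real.log_le_sub_one_of_pos (by positivity)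
    rw [Real.log_div one_ne_zero (ne_of_gt h), Real.log_one] at hlog
    have hinv : x * (1/x) = 1 := by field_simp
    have h1 : |x * Real.log x| ≤ 1 := by
      have hxl : x * Real.log x ≤ 0 :=
        mul_nonpos_of_nonneg_of_nonpos hx0 (Real.log_nonpos hx0 hx1)
      rw [abs_of_nonpos hxl]
      nlinarith [mul_le_mul_of_nonneg_left hlog hx0]
    have h2 : |x * Real.log c| ≤ |Real.log c| := by
      rw [abs_mul, abs_of_nonneg hx0]
      nlinarith [abs_nonneg (Real.log c)]
    calc |x * Real.log x - x * Real.log c| ≤ |x * Real.log x| + |x * Real.log c| :=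
          abs_sub _ _
      _ ≤ 1 + |Real.log c| := add_le_add h1 h2

theorem entropic_ot_value_tendsto_ot {n m : ℕ}
    (C : Matrix (Fin n) (Fin m) ℝ)
    (a : Fin n → ℝ) (b : Fin m → ℝ)
    (ha : ∀ i, 0 < a i) (hb : ∀ j, 0 < b j)
    (hsa : ∑ i, a i = 1) (hsb : ∑ j, b j = 1) :
    Tendsto
      (fun ε : ℝ => sInf ((fun P => (∑ i, ∑ j, C i j * P i j) + ε * relEntropy P a b) ''
        transportPolytope a b))
      (nhdsWithin 0 (Set.Ioi 0))
      (nhds (sInf ((fun P => ∑ i, ∑ j, C i j * P i j) '' transportPolytope a b))) := by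
  set K := transportPolytope a b with hK
  have hne : K.Nonempty := by
    refine ⟨fun i j => a i * b j, fun i j => (mul_pos (ha i) (hb j)).le, fun i => ?_, fun j => ?_⟩
    · rw [← Finset.mul_sum, hsb, mul_one]
    · rw [← Finset.sum_mul, hsa, one_mul]
  have hmem : ∀ P ∈ K, (∀ i j, 0 ≤ P i j) ∧ (∀ i, ∑ j, P i j = a i) ∧ (∀ j, ∑ i, P i j = b j) :=
    fun P hP => hP
  have hPle1 : ∀ P ∈ K, ∀ i j, P i j ≤ 1 := by
    intro P hP i j
    have h1 : P i j ≤ ∑ i', P i' j :=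
      Finset.single_le_sum (fun i' _ => (hmem P hP).1 i' j) (mem_univ i)
    have h2 : b j ≤ 1 := by
      calc b j ≤ ∑ j', b j' := Finset.single_le_sum (fun j' _ => (hb j').le) (mem_univ j)
        _ = 1 := hsb
    rw [(hmem P hP).2.2 j] at h1
    linarith
  set M : ℝ := ∑ i, ∑ j, (1 + |Real.log (a i * b j)|) with hMdef
  have hM0 : 0 ≤ M := by positivity
  have hH : ∀ P ∈ K, |relEntropy P a b| ≤ M := by
    intro P hP
    rw [relEntropy, hMdef]
    calc |∑ i, ∑ j, P i j * Real.log (P i j / (a i * b j))|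
        ≤ ∑ i, |∑ j, P i j * Real.log (P i j / (a i * b j))| := Finset.abs_sum_le_sum_abs _ _
      _ ≤ ∑ i, ∑ j, |P i j * Real.log (P i j / (a i * b j))| :=
          Finset.sum_le_sum fun i _ => Finset.abs_sum_le_sum_abs _ _
      _ ≤ ∑ i, ∑ j, (1 + |Real.log (a i * b j)|) :=
          Finset.sum_le_sum fun i _ => Finset.sum_le_sum fun j _ =>
            aux_xlog ((hmem P hP).1 i j) (hPle1 P hP i j) (mul_pos (ha i) (hb j))
  set L : ℝ := ∑ i, ∑ j, |C i j| with hLdef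
  set f0 : Matrix (Fin n) (Fin m) ℝ → ℝ := fun P => ∑ i, ∑ j, C i j * P i j with hf0
  have hC : ∀ P ∈ K, |f0 P| ≤ L := by
    intro P hP
    calc |∑ i, ∑ j, C i j * P i j| ≤ ∑ i, |∑ j, C i j * P i j| := Finset.abs_sum_le_sum_abs _ _
      _ ≤ ∑ i, ∑ j, |C i j * P i j| :=
          Finset.sum_le_sum fun i _ => Finset.abs_sum_le_sum_abs _ _
      _ ≤ ∑ i, ∑ j, |C i j| := by
          refine Finset.sum_le_sum fun i _ => Finset.sum_le_sum fun j _ => ?_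
          rw [abs_mul]
          have h1 : |P i j| ≤ 1 := by
            rw [abs_of_nonneg ((hmem P hP).1 i j)]; exact hPle1 P hP i j
          nlinarith [abs_nonneg (C i j)]
  have bdd0 : BddBelow (f0 '' K) := by
    refine ⟨-L, fun y hy => ?_⟩
    obtain ⟨P, hP, rfl⟩ := hy
    linarith [abs_le.mp (hC P hP)]
  set S : ℝ := sInf (f0 '' K) with hS
  -- bounds for each ε > 0
  have key : ∀ ε : ℝ, 0 < ε →
      S - ε * M ≤ sInf ((fun P => f0 P + ε * relEntropy P a b) '' K) ∧
      sInf ((fun P => f0 P + ε * relEntropy P a b) '' K) ≤ S + ε * M := by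
    intro ε hε
    set g : Matrix (Fin n) (Fin m) ℝ → ℝ := fun P => f0 P + ε * relEntropy P a b with hg
    have hgb : ∀ P ∈ K, |ε * relEntropy P a b| ≤ ε * M := by
      intro P hP
      rw [abs_mul, abs_of_pos hε]
      exact mul_le_mul_of_nonneg_left (hH P hP) hε.le
    have bddε : BddBelow (g '' K) := by
      refine ⟨-L - ε * M, fun y hy => ?_⟩
      obtain ⟨P, hP, rfl⟩ := hy
      have := abs_le.mp (hC P hP)
      have := abs_le.mp (hgb P hP)
      simp only [hg]
      linarith [this.1]
    constructor
    · refine le_csInf (hne.image g) ?_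
      rintro y ⟨P, hP, rfl⟩
      have h1 : S ≤ f0 P := csInf_le bdd0 ⟨P, hP, rfl⟩
      have h2 := abs_le.mp (hgb P hP)
      simp only [hg]
      linarith [h2.1]
    · rw [← sub_le_iff_le_add]
      refine le_csInf (hne.image f0) ?_
      rintro y ⟨P, hP, rfl⟩
      have h1 : sInf (g '' K) ≤ g P := csInf_le bddε ⟨P, hP, rfl⟩
      have h2 := abs_le.mp (hgb P hP)
      simp only [hg] at h1
      linarith [h2.2]
  -- squeeze
  have hlo : Tendsto (fun ε : ℝ => S - ε * M) (nhdsWithin 0 (Set.Ioi 0)) (nhds S) := by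
    have : Tendsto (fun ε : ℝ => S - ε * M) (nhds 0) (nhds (S - 0 * M)) := by
      exact (tendsto_const_nhds.sub (tendsto_id.mul tendsto_const_nhds))
    simpa using this.mono_left nhdsWithin_le_nhds
  have hhi : Tendsto (fun ε : ℝ => S + ε * M) (nhdsWithin 0 (Set.Ioi 0)) (nhds S) := by
    have : Tendsto (fun ε : ℝ => S + ε * M) (nhds 0) (nhds (S + 0 * M)) := by
      exact (tendsto_const_nhds.add (tendsto_id.mul tendsto_const_nhds))
    simpa using this.mono_left nhdsWithin_le_nhds
  refine tendsto_of_tendsto_of_tendsto_of_le_of_le' hlo hhi ?_ ?_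
  · filter_upwards [self_mem_nhdsWithin] with ε hε
    exact (key ε hε).1
  · filter_upwards [self_mem_nhdsWithin] with ε hε
    exact (key ε hε).2
end

section
/- As ε → +∞, the unique minimizer P_ε of ⟨C,P⟩ + ε·H(P | a⊗b) over Π(a,b) converges to the product coupling a⊗b, and consequently ⟨C, P_ε⟩ → ∑_{ij} C_{ij} a_i b_j. -/
open Finset Filter

lemma fderiv_aux (q : ℝ) {p : ℝ} (hp : 0 < p) :
    HasDerivAt (fun x : ℝ => x * Real.log x - x * Real.log q - x + q - (x - q)^2/2)
      (Real.log p - Real.log q - (p - q)) p := by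
  have h1 := Real.hasDerivAt_mul_log (ne_of_gt hp)
  have h2 : HasDerivAt (fun x : ℝ => x * Real.log q) (Real.log q) p := by
    simpa using (hasDerivAt_id p).mul_const (Real.log q)
  have h3 : HasDerivAt (fun x : ℝ => (x - q)^2/2) (p - q) p := by
    have : HasDerivAt (fun x : ℝ => (x - q)^2) (2 * (p - q)^1 * 1) p :=
      (((hasDerivAt_id p).sub_const q).pow 2)
    simpa using this.div_const 2
  have := (((h1.sub h2).sub (hasDerivAt_id p)).add_const q).sub h3
  exact this.congr_deriv (by ring)

lemma key_ineq {p q : ℝ} (hp0 : 0 ≤ p) (hp1 : p ≤ 1) (hq0 : 0 < q) (hq1 : q ≤ 1) :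
    (p - q)^2 / 2 ≤ p * Real.log (p / q) - p + q := by
  rcases eq_or_lt_of_le hp0 with h0 | hp0'
  · rw [← h0]
    simp only [zero_mul, zero_sub, neg_add_eq_sub]
    nlinarith [sq_nonneg q]
  · set f : ℝ → ℝ := fun x => x * Real.log x - x * Real.log q - x + q - (x - q)^2/2 with hf
    have hfq : f q = 0 := by simp [hf]
    have hcont : ContinuousOn f (Set.Ioi (0:ℝ)) := by
      intro x hx
      exact ((fderiv_aux q hx).continuousAt).continuousWithinAt
    have key : 0 ≤ f p := by
      rcases le_total q p with hle | hle
      · have hmono : MonotoneOn f (Set.Icc q 1) := by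
          apply monotoneOn_of_deriv_nonneg (convex_Icc q 1)
          · exact hcont.mono (fun x hx => lt_of_lt_of_le hq0 hx.1)
          · intro x hx
            rw [interior_Icc] at hx
            exact (fderiv_aux q (hq0.trans hx.1)).differentiableAt.differentiableWithinAt
          · intro x hx
            rw [interior_Icc] at hx
            have hx0 : 0 < x := hq0.trans hx.1
            rw [(fderiv_aux q hx0).deriv]
            have hlog : 1 - (x/q)⁻¹ ≤ Real.log (x/q) :=
              Real.one_sub_inv_le_log_of_pos (div_pos hx0 hq0)
            rw [Real.log_div (ne_of_gt hx0) (ne_of_gt hq0)] at hlog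
            have h2 : (x/q)⁻¹ = q / x := by field_simp
            rw [h2] at hlog
            have h1 : 1 - q/x = (x - q)/x := by field_simp
            rw [h1] at hlog
            have : x - q ≤ (x - q)/x := by
              rw [le_div_iff₀ hx0]
              nlinarith [hx.2, hx.1, hq0]
            linarith
        have := hmono ⟨le_refl q, hq1⟩ ⟨hle, hp1⟩ hle
        rw [hfq] at this; exact this
      · have hmono : AntitoneOn f (Set.Icc p q) := by
          apply antitoneOn_of_deriv_nonpos (convex_Icc p q)
          · exact hcont.mono (fun x hx => lt_of_lt_of_le hp0' hx.1)
          · intro x hx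
            rw [interior_Icc] at hx
            exact (fderiv_aux q (hp0'.trans hx.1)).differentiableAt.differentiableWithinAt
          · intro x hx
            rw [interior_Icc] at hx
            have hx0 : 0 < x := hp0'.trans hx.1
            rw [(fderiv_aux q hx0).deriv]
            have hlog : Real.log (x/q) ≤ x/q - 1 :=
              Real.log_le_sub_one_of_pos (div_pos hx0 hq0)
            rw [Real.log_div (ne_of_gt hx0) (ne_of_gt hq0)] at hlog
            have h1 : x/q - 1 = (x - q)/q := by field_simp
            rw [h1] at hlog
            have : (x - q)/q ≤ x - q := by
              rw [div_le_iff₀ hq0]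
              nlinarith [hx.2, hq0, hq1]
            linarith
        have := hmono ⟨le_refl p, hle⟩ ⟨hle, le_refl q⟩ hle
        rw [hfq] at this; exact this
    have hexp : f p = p * Real.log (p/q) - p + q - (p - q)^2/2 := by
      rw [hf]; simp only
      rw [Real.log_div (ne_of_gt hp0') (ne_of_gt hq0)]
      ring
    rw [hexp] at key
    linarith

theorem entropic_ot_minimizer_tendsto_product {n m : ℕ}
    (C : Matrix (Fin n) (Fin m) ℝ)
    (a : Fin n → ℝ) (b : Fin m → ℝ)
    (ha : ∀ i, 0 < a i) (hb : ∀ j, 0 < b j)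
    (hsa : ∑ i, a i = 1) (hsb : ∑ j, b j = 1)
    (P : ℝ → Matrix (Fin n) (Fin m) ℝ)
    (hP : ∀ ε > 0, P ε ∈ transportPolytope a b ∧
      ∀ Q ∈ transportPolytope a b,
        (∑ i, ∑ j, C i j * P ε i j) + ε * relEntropy (P ε) a b ≤
          (∑ i, ∑ j, C i j * Q i j) + ε * relEntropy Q a b) :
    Tendsto P atTop (nhds (fun i j => a i * b j)) ∧
    Tendsto (fun ε => ∑ i, ∑ j, C i j * P ε i j) atTop
      (nhds (∑ i, ∑ j, C i j * (a i * b j))) := by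
  -- basic bounds
  have ha1 : ∀ i, a i ≤ 1 := fun i => hsa ▸ Finset.single_le_sum
    (fun i _ => (ha i).le) (Finset.mem_univ i)
  have hb1 : ∀ j, b j ≤ 1 := fun j => hsb ▸ Finset.single_le_sum
    (fun j _ => (hb j).le) (Finset.mem_univ j)
  have hq0 : ∀ i j, 0 < a i * b j := fun i j => mul_pos (ha i) (hb j)
  have hq1 : ∀ i j, a i * b j ≤ 1 := fun i j =>
    mul_le_one₀ (ha1 i) (hb j).le (hb1 j)
  -- product coupling is in the polytope
  have hab : (fun i j => a i * b j) ∈ transportPolytope a b := by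
    refine ⟨fun i j => (hq0 i j).le, fun i => ?_, fun j => ?_⟩
    · rw [← Finset.mul_sum, hsb, mul_one]
    · rw [← Finset.sum_mul, hsa, one_mul]
  -- entropy of the product coupling is 0
  have hEnt0 : relEntropy (fun i j => a i * b j) a b = 0 := by
    unfold relEntropy
    refine Finset.sum_eq_zero (fun i _ => Finset.sum_eq_zero (fun j _ => ?_))
    rw [div_self (ne_of_gt (hq0 i j)), Real.log_one, mul_zero]
  -- entries of any coupling lie in [0,1]
  have hQ1 : ∀ Q ∈ transportPolytope a b, ∀ i j, Q i j ≤ 1 := by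
    intro Q hQ i j
    calc Q i j ≤ ∑ j', Q i j' :=
          Finset.single_le_sum (fun j' _ => hQ.1 i j') (Finset.mem_univ j)
      _ = a i := hQ.2.1 i
      _ ≤ 1 := ha1 i
  -- total masses
  have hmass : ∀ Q ∈ transportPolytope a b, ∑ i, ∑ j, Q i j = 1 := by
    intro Q hQ
    rw [show ∑ i, ∑ j, Q i j = ∑ i, a i from Finset.sum_congr rfl
      (fun i _ => hQ.2.1 i), hsa]
  -- relEntropy lower bound: per-entry square bound
  have hlow : ∀ Q ∈ transportPolytope a b, ∀ i j,
      (Q i j - a i * b j)^2 / 2 ≤ relEntropy Q a b := by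
    intro Q hQ i j
    have hterm : ∀ i' j', (Q i' j' - a i' * b j')^2 / 2 ≤
        Q i' j' * Real.log (Q i' j' / (a i' * b j')) - Q i' j' + a i' * b j' :=
      fun i' j' => key_ineq (hQ.1 i' j') (hQ1 Q hQ i' j') (hq0 i' j') (hq1 i' j')
    have hsum : ∑ i', ∑ j', (Q i' j' * Real.log (Q i' j' / (a i' * b j'))
        - Q i' j' + a i' * b j') = relEntropy Q a b := by
      have h1 : ∑ i', ∑ j', (a i' * b j') = 1 := hmass _ hab
      have h2 := hmass Q hQ
      unfold relEntropy
      simp only [Finset.sum_add_distrib, Finset.sum_sub_distrib]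
      rw [h1, h2]; ring
    calc (Q i j - a i * b j)^2 / 2
        ≤ Q i j * Real.log (Q i j / (a i * b j)) - Q i j + a i * b j := hterm i j
      _ ≤ ∑ j', (Q i j' * Real.log (Q i j' / (a i * b j')) - Q i j' + a i * b j') :=
          Finset.single_le_sum (fun j' _ =>
            le_trans (div_nonneg (sq_nonneg _) (by norm_num)) (hterm i j'))
            (Finset.mem_univ j)
      _ ≤ ∑ i', ∑ j', (Q i' j' * Real.log (Q i' j' / (a i' * b j'))
            - Q i' j' + a i' * b j') :=
          Finset.single_le_sum (fun i' _ => Finset.sum_nonneg (fun j' _ =>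
            le_trans (div_nonneg (sq_nonneg _) (by norm_num)) (hterm i' j')))
            (Finset.mem_univ i)
      _ = relEntropy Q a b := hsum
  -- cost bound
  set S : ℝ := ∑ i, ∑ j, |C i j| with hS
  have hScost : ∀ Q ∈ transportPolytope a b, |∑ i, ∑ j, C i j * Q i j| ≤ S := by
    intro Q hQ
    calc |∑ i, ∑ j, C i j * Q i j| ≤ ∑ i, |∑ j, C i j * Q i j| :=
          Finset.abs_sum_le_sum_abs _ _
      _ ≤ ∑ i, ∑ j, |C i j * Q i j| :=
          Finset.sum_le_sum (fun i _ => Finset.abs_sum_le_sum_abs _ _)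
      _ ≤ S := Finset.sum_le_sum (fun i _ => Finset.sum_le_sum (fun j _ => by
          rw [abs_mul]
          have habs : |Q i j| ≤ 1 := by
            rw [abs_le]
            exact ⟨by linarith [hQ.1 i j], hQ1 Q hQ i j⟩
          calc |C i j| * |Q i j| ≤ |C i j| * 1 :=
                mul_le_mul_of_nonneg_left habs (abs_nonneg _)
            _ = |C i j| := mul_one _))
  have hS0 : 0 ≤ S := Finset.sum_nonneg (fun i _ => Finset.sum_nonneg
    (fun j _ => abs_nonneg _))
  -- entropy bound for the minimizer
  have hEbound : ∀ ε > (0:ℝ), relEntropy (P ε) a b ≤ 2 * S / ε := by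
    intro ε hε
    obtain ⟨hmem, hmin⟩ := hP ε hε
    have := hmin _ hab
    rw [hEnt0, mul_zero, add_zero] at this
    have h1 : ε * relEntropy (P ε) a b ≤ 2 * S := by
      have hc1 := (abs_le.1 (hScost _ hmem)).1
      have hc2 := (abs_le.1 (hScost _ hab)).2
      linarith
    rw [div_eq_inv_mul, ← mul_le_mul_iff_right₀ hε, ← mul_assoc, mul_inv_cancel₀ (ne_of_gt hε),
      one_mul]
    exact h1
  -- entrywise convergence
  have hentry : ∀ i j, Tendsto (fun ε => P ε i j) atTop (nhds (a i * b j)) := by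
    intro i j
    rw [tendsto_iff_dist_tendsto_zero]
    apply squeeze_zero' (Filter.Eventually.of_forall (fun ε => dist_nonneg))
      (g := fun ε => Real.sqrt (4 * S / ε))
    · filter_upwards [eventually_gt_atTop (0:ℝ)] with ε hε
      obtain ⟨hmem, _⟩ := hP ε hε
      have h1 : (P ε i j - a i * b j)^2 ≤ 4 * S / ε := by
        have := hlow _ hmem i j
        have h2 := hEbound ε hε
        have : (P ε i j - a i * b j)^2 / 2 ≤ 2 * S / ε := le_trans this h2
        calc (P ε i j - a i * b j)^2 = 2 * ((P ε i j - a i * b j)^2 / 2) := by ring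
          _ ≤ 2 * (2 * S / ε) := by linarith
          _ = 4 * S / ε := by ring
      rw [Real.dist_eq, ← Real.sqrt_sq_eq_abs]
      exact Real.sqrt_le_sqrt h1
    · have h1 : Tendsto (fun ε : ℝ => 4 * S / ε) atTop (nhds 0) :=
        Tendsto.div_atTop tendsto_const_nhds tendsto_id
      have := (Real.continuous_sqrt.tendsto' 0 0 Real.sqrt_zero).comp h1
      exact this
  constructor
  · apply tendsto_pi_nhds.2
    intro i
    rw [tendsto_pi_nhds]
    intro j
    exact hentry i j
  · exact tendsto_finset_sum _ (fun i _ => tendsto_finset_sum _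
      (fun j _ => ((hentry i j).const_mul (C i j))))
end

section
/- Define the discrete Sinkhorn loss W̄_ε(a,b) = 2W_ε(a,b) − W_ε(a,a) − W_ε(b,b), where W_ε(a,b) = ⟨C^{ab}, P_ε^{ab}⟩ and P_ε^{ab} is the entropic-OT optimal coupling. Then as ε → +∞, W̄_ε(a,b) converges to the MMD energy 2∑_{ij} c(x_i,y_j)a_i b_j − ∑_{ii'} c(x_i,x_{i'})a_i a_{i'} − ∑_{jj'} c(y_j,y_{j'})b_j b_{j'}, i.e. the squared MMD with kernel k = −c. -/
open Finset Filter

/-- `P` is the entropic-OT optimal coupling at regularization `ε` for cost `C`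
and marginals `a`, `b`. -/
def IsEntropicOptimal {n m : ℕ} (C : Matrix (Fin n) (Fin m) ℝ) (ε : ℝ)
    (a : Fin n → ℝ) (b : Fin m → ℝ) (P : Matrix (Fin n) (Fin m) ℝ) : Prop :=
  P ∈ transportPolytope a b ∧
    ∀ Q ∈ transportPolytope a b,
      (∑ i, ∑ j, C i j * P i j) + ε * relEntropy P a b ≤
        (∑ i, ∑ j, C i j * Q i j) + ε * relEntropy Q a b

lemma phi_nonneg' (u v : ℝ) (hu : 0 ≤ u) (hv : 0 < v) :
    u - v ≤ u * Real.log (u / v) := by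
  rcases eq_or_lt_of_le hu with h | h
  · simp [← h]; linarith
  · have hlog : 1 - (u / v)⁻¹ ≤ Real.log (u / v) :=
      Real.one_sub_inv_le_log_of_pos (div_pos h hv)
    have hinv : (u / v)⁻¹ = v / u := by field_simp
    have := mul_le_mul_of_nonneg_left hlog (le_of_lt h)
    rw [hinv] at this
    have huv : u * (1 - v / u) = u - v := by field_simp
    linarith [huv ▸ this]

lemma sq_le_four_phi (u v : ℝ) (hu0 : 0 ≤ u) (hu1 : u ≤ 1) (hv0 : 0 < v) (hv1 : v ≤ 1) :
    (u - v) ^ 2 ≤ 4 * (u * Real.log (u / v) - u + v) := by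
  rcases eq_or_lt_of_le hu0 with h | h
  · simp [← h]; nlinarith
  · set s := Real.sqrt u with hs
    set t := Real.sqrt v with ht
    have hs2 : s ^ 2 = u := Real.sq_sqrt h.le
    have ht2 : t ^ 2 = v := Real.sq_sqrt hv0.le
    have hspos : 0 < s := Real.sqrt_pos.2 h
    have htpos : 0 < t := Real.sqrt_pos.2 hv0
    have hs1 : s ≤ 1 := by
      rw [hs]; simpa using Real.sqrt_le_sqrt hu1
    have ht1 : t ≤ 1 := by
      rw [ht]; simpa using Real.sqrt_le_sqrt hv1
    -- key: u * log (u/v) ≥ 2u - 2 s t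
    have hst : u / v = (s / t) ^ 2 := by
      rw [div_pow, hs2, ht2]
    have hlog : Real.log (u / v) = 2 * Real.log (s / t) := by
      rw [hst, Real.log_pow]; push_cast; ring
    have hlb : 1 - (s / t)⁻¹ ≤ Real.log (s / t) :=
      Real.one_sub_inv_le_log_of_pos (div_pos hspos htpos)
    have hinv : (s / t)⁻¹ = t / s := by field_simp
    rw [hinv] at hlb
    have hkey : 2 * u - 2 * (s * t) ≤ u * Real.log (u / v) := by
      have := mul_le_mul_of_nonneg_left hlb h.le
      have h2 : u * (t / s) = s * t := by
        rw [← hs2]; field_simp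
      calc 2 * u - 2 * (s * t) = 2 * (u * (1 - t / s)) := by rw [mul_sub, h2]; ring
        _ ≤ 2 * (u * Real.log (s / t)) := by linarith
        _ = u * Real.log (u / v) := by rw [hlog]; ring
    nlinarith [sq_nonneg (s - t), sq_nonneg (s + t), mul_pos hspos htpos,
      mul_le_one₀ hs1 htpos.le ht1]

/-- Main quantitative lemma: the entropic-OT cost converges to the product cost. -/
lemma entropic_tendsto_product {n m : ℕ} (C : Matrix (Fin n) (Fin m) ℝ)
    (a : Fin n → ℝ) (b : Fin m → ℝ)
    (ha : ∀ i, 0 < a i) (hb : ∀ j, 0 < b j)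
    (hsa : ∑ i, a i = 1) (hsb : ∑ j, b j = 1)
    (P : ℝ → Matrix (Fin n) (Fin m) ℝ)
    (hP : ∀ ε > 0, IsEntropicOptimal C ε a b (P ε)) :
    Tendsto (fun ε => ∑ i, ∑ j, C i j * P ε i j) atTop
      (nhds (∑ i, ∑ j, C i j * (a i * b j))) := by
  classical
  set L : ℝ := ∑ i, ∑ j, C i j * (a i * b j) with hL
  set M : ℝ := ∑ i, ∑ j, |C i j| with hM
  set S : ℝ := ∑ i, ∑ j, (C i j) ^ 2 with hS
  have ha1 : ∀ i, a i ≤ 1 := by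
    intro i
    rw [← hsa]
    exact Finset.single_le_sum (fun i _ => (ha i).le) (Finset.mem_univ i)
  have hb1 : ∀ j, b j ≤ 1 := by
    intro j
    rw [← hsb]
    exact Finset.single_le_sum (fun j _ => (hb j).le) (Finset.mem_univ j)
  -- the product coupling is in the polytope with zero entropy
  have hprod : (Matrix.of fun i j => a i * b j) ∈ transportPolytope a b := by
    refine ⟨fun i j => (mul_pos (ha i) (hb j)).le, fun i => ?_, fun j => ?_⟩
    · simp [← Finset.mul_sum, hsb]
    · simp [← Finset.sum_mul, hsa]
  have hprodent : relEntropy (Matrix.of fun i j => a i * b j) a b = 0 := by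
    unfold relEntropy
    apply Finset.sum_eq_zero; intro i _
    apply Finset.sum_eq_zero; intro j _
    rw [Matrix.of_apply, div_self (mul_pos (ha i) (hb j)).ne', Real.log_one, mul_zero]
  have hMnn : 0 ≤ M := Finset.sum_nonneg fun i _ =>
    Finset.sum_nonneg fun j _ => abs_nonneg _
  have hSnn : 0 ≤ S := Finset.sum_nonneg fun i _ =>
    Finset.sum_nonneg fun j _ => sq_nonneg _
  -- eventual bound
  have hbound : ∀ ε > 0,
      |(∑ i, ∑ j, C i j * P ε i j) - L| ≤ Real.sqrt (8 * S * M / ε) := by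
    intro ε hε
    obtain ⟨⟨hPnn, hProw, hPcol⟩, hopt⟩ := hP ε hε
    have hP1 : ∀ i j, P ε i j ≤ 1 := by
      intro i j
      refine le_trans ?_ (ha1 i)
      rw [← hProw i]
      exact Finset.single_le_sum (fun j' _ => hPnn i j') (Finset.mem_univ j)
    -- relEntropy nonneg
    have hsumP : ∑ i, ∑ j, P ε i j = 1 := by
      rw [← hsa]; exact Finset.sum_congr rfl fun i _ => hProw i
    have hsumQ : ∑ i, ∑ j, a i * b j = 1 := by
      simp [← Finset.mul_sum, hsb, hsa]
    have hKLnn : 0 ≤ relEntropy (P ε) a b := by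
      unfold relEntropy
      have h1 : ∀ i ∈ Finset.univ, ∀ j ∈ (Finset.univ : Finset (Fin m)),
          P ε i j - a i * b j ≤ P ε i j * Real.log (P ε i j / (a i * b j)) :=
        fun i _ j _ => phi_nonneg' _ _ (hPnn i j) (mul_pos (ha i) (hb j))
      have := Finset.sum_le_sum fun i (hi : i ∈ Finset.univ) =>
        Finset.sum_le_sum (h1 i hi)
      simp only [Finset.sum_sub_distrib] at this
      rw [hsumP, hsumQ] at this
      linarith
    -- optimality against the product coupling
    have hopt' := hopt _ hprod
    rw [hprodent, mul_zero, add_zero] at hopt'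
    have hopt'' : (∑ i, ∑ j, C i j * P ε i j) + ε * relEntropy (P ε) a b ≤ L := by
      simpa [hL] using hopt'
    -- bounds on inner products
    have habs1 : |∑ i, ∑ j, C i j * P ε i j| ≤ M := by
      refine le_trans (Finset.abs_sum_le_sum_abs _ _) ?_
      refine Finset.sum_le_sum fun i _ => ?_
      refine le_trans (Finset.abs_sum_le_sum_abs _ _) ?_
      refine Finset.sum_le_sum fun j _ => ?_
      rw [abs_mul]
      calc |C i j| * |P ε i j| ≤ |C i j| * 1 := by
            refine mul_le_mul_of_nonneg_left ?_ (abs_nonneg _)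
            rw [abs_of_nonneg (hPnn i j)]; exact hP1 i j
        _ = |C i j| := mul_one _
    have habs2 : |L| ≤ M := by
      rw [hL]
      refine le_trans (Finset.abs_sum_le_sum_abs _ _) ?_
      refine Finset.sum_le_sum fun i _ => ?_
      refine le_trans (Finset.abs_sum_le_sum_abs _ _) ?_
      refine Finset.sum_le_sum fun j _ => ?_
      rw [abs_mul]
      calc |C i j| * |a i * b j| ≤ |C i j| * 1 := by
            refine mul_le_mul_of_nonneg_left ?_ (abs_nonneg _)
            rw [abs_of_nonneg (mul_pos (ha i) (hb j)).le]
            exact le_trans (mul_le_mul_of_nonneg_left (hb1 j) (ha i).le) (by simpa using ha1 i)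
        _ = |C i j| := mul_one _
    have hKLle : ε * relEntropy (P ε) a b ≤ 2 * M := by
      have h1 : -M ≤ ∑ i, ∑ j, C i j * P ε i j := neg_le_of_abs_le habs1
      have h2 : L ≤ M := le_of_abs_le habs2
      linarith
    -- Pinsker-type bound
    have hquad : ∑ i, ∑ j, (P ε i j - a i * b j) ^ 2 ≤ 4 * relEntropy (P ε) a b := by
      have h1 : ∀ i ∈ Finset.univ, ∀ j ∈ (Finset.univ : Finset (Fin m)),
          (P ε i j - a i * b j) ^ 2 ≤
            4 * (P ε i j * Real.log (P ε i j / (a i * b j)) - P ε i j + a i * b j) := by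
        intro i _ j _
        exact sq_le_four_phi _ _ (hPnn i j) (hP1 i j) (mul_pos (ha i) (hb j))
          (le_trans (mul_le_mul_of_nonneg_left (hb1 j) (ha i).le) (by simpa using ha1 i))
      have := Finset.sum_le_sum fun i (hi : i ∈ Finset.univ) =>
        Finset.sum_le_sum (h1 i hi)
      have hrw : ∑ i, ∑ j, 4 * (P ε i j * Real.log (P ε i j / (a i * b j))
          - P ε i j + a i * b j)
          = 4 * relEntropy (P ε) a b
            - 4 * (∑ i, ∑ j, P ε i j) + 4 * (∑ i, ∑ j, a i * b j) := by
        unfold relEntropy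
        simp only [mul_sub, mul_add, Finset.sum_add_distrib, Finset.sum_sub_distrib,
          ← Finset.mul_sum]
      rw [hrw, hsumP, hsumQ] at this
      linarith
    -- Cauchy–Schwarz
    have hCS : ((∑ i, ∑ j, C i j * P ε i j) - L) ^ 2 ≤ 8 * S * M / ε := by
      have hdiff : (∑ i, ∑ j, C i j * P ε i j) - L
          = ∑ p : Fin n × Fin m, C p.1 p.2 * (P ε p.1 p.2 - a p.1 * b p.2) := by
        rw [hL, ← Finset.sum_sub_distrib]
        rw [Fintype.sum_prod_type]
        refine Finset.sum_congr rfl fun i _ => ?_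
        rw [← Finset.sum_sub_distrib]
        exact Finset.sum_congr rfl fun j _ => by ring
      have hcs := Finset.sum_mul_sq_le_sq_mul_sq Finset.univ
        (fun p : Fin n × Fin m => C p.1 p.2)
        (fun p : Fin n × Fin m => P ε p.1 p.2 - a p.1 * b p.2)
      have hSprod : ∑ p : Fin n × Fin m, (C p.1 p.2) ^ 2 = S := by
        rw [hS, Fintype.sum_prod_type]
      have hQprod : ∑ p : Fin n × Fin m, (P ε p.1 p.2 - a p.1 * b p.2) ^ 2
          = ∑ i, ∑ j, (P ε i j - a i * b j) ^ 2 := by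
        rw [Fintype.sum_prod_type]
      rw [hdiff]
      calc (∑ p : Fin n × Fin m, C p.1 p.2 * (P ε p.1 p.2 - a p.1 * b p.2)) ^ 2
          ≤ S * ∑ i, ∑ j, (P ε i j - a i * b j) ^ 2 := by
            rw [← hSprod, ← hQprod]; exact hcs
        _ ≤ S * (4 * relEntropy (P ε) a b) :=
            mul_le_mul_of_nonneg_left hquad hSnn
        _ ≤ 8 * S * M / ε := by
            rw [le_div_iff₀ hε]
            calc S * (4 * relEntropy (P ε) a b) * ε
                = 4 * S * (ε * relEntropy (P ε) a b) := by ring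
              _ ≤ 4 * S * (2 * M) := by
                  refine mul_le_mul_of_nonneg_left hKLle (by positivity)
              _ = 8 * S * M := by ring
    exact Real.abs_le_sqrt hCS
  -- conclude by squeeze
  have hg : Tendsto (fun ε : ℝ => Real.sqrt (8 * S * M / ε)) atTop (nhds 0) := by
    have h1 : Tendsto (fun ε : ℝ => 8 * S * M / ε) atTop (nhds 0) :=
      tendsto_const_nhds.div_atTop tendsto_id
    have h2 : Tendsto Real.sqrt (nhds 0) (nhds 0) := by
      simpa using Real.continuous_sqrt.tendsto 0
    exact h2.comp h1
  have hsq : Tendsto (fun ε => (∑ i, ∑ j, C i j * P ε i j) - L) atTop (nhds 0) := by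
    refine squeeze_zero_norm' ?_ hg
    filter_upwards [eventually_gt_atTop (0 : ℝ)] with ε hε
    simpa using hbound ε hε
  have := hsq.add_const L
  simpa using this

theorem sinkhorn_loss_tendsto_mmd {X : Type*} {n m : ℕ}
    (c : X → X → ℝ) (x : Fin n → X) (y : Fin m → X)
    (a : Fin n → ℝ) (b : Fin m → ℝ)
    (ha : ∀ i, 0 < a i) (hb : ∀ j, 0 < b j)
    (hsa : ∑ i, a i = 1) (hsb : ∑ j, b j = 1)
    (Pab : ℝ → Matrix (Fin n) (Fin m) ℝ)
    (Paa : ℝ → Matrix (Fin n) (Fin n) ℝ)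
    (Pbb : ℝ → Matrix (Fin m) (Fin m) ℝ)
    (hPab : ∀ ε > 0, IsEntropicOptimal (fun i j => c (x i) (y j)) ε a b (Pab ε))
    (hPaa : ∀ ε > 0, IsEntropicOptimal (fun i i' => c (x i) (x i')) ε a a (Paa ε))
    (hPbb : ∀ ε > 0, IsEntropicOptimal (fun j j' => c (y j) (y j')) ε b b (Pbb ε)) :
    Tendsto
      (fun ε =>
        2 * (∑ i, ∑ j, c (x i) (y j) * Pab ε i j)
          - (∑ i, ∑ i', c (x i) (x i') * Paa ε i i')
          - (∑ j, ∑ j', c (y j) (y j') * Pbb ε j j'))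
      atTop
      (nhds
        (2 * (∑ i, ∑ j, c (x i) (y j) * (a i * b j))
          - (∑ i, ∑ i', c (x i) (x i') * (a i * a i'))
          - (∑ j, ∑ j', c (y j) (y j') * (b j * b j')))) := by
  have h1 := entropic_tendsto_product (fun i j => c (x i) (y j)) a b ha hb hsa hsb Pab hPab
  have h2 := entropic_tendsto_product (fun i i' => c (x i) (x i')) a a ha ha hsa hsa Paa hPaa
  have h3 := entropic_tendsto_product (fun j j' => c (y j) (y j')) b b hb hb hsb hsb Pbb hPbb
  exact ((h1.const_mul 2).sub h2).sub h3
end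

section
/- Minimizing the squared 2-Wasserstein distance W_2²(μ_θ, ν) over empirical measures μ_θ supported on K points with free weights, against the empirical measure ν = (1/N)∑_j δ_{y_j} on ℝ^d, is equivalent to the K-means problem: the optimal value equals min over centers c_1,…,c_K ∈ ℝ^d of (1/N)∑_j min_k ‖y_j − c_k‖². -/
open Finset

private lemma exists_min_fin {K : ℕ} [Nonempty (Fin K)] (f : Fin K → ℝ) :
    ∃ k₀, (⨅ k, f k) = f k₀ ∧ ∀ k, f k₀ ≤ f k := by
  obtain ⟨k₀, hk₀⟩ := Finite.exists_min f
  exact ⟨k₀, le_antisymm (ciInf_le (Finite.bddBelow_range f) k₀) (le_ciInf hk₀), hk₀⟩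

theorem wasserstein_min_over_k_points_eq_kmeans {d K N : ℕ} [Nonempty (Fin K)]
    (hN : 0 < N) (y : Fin N → EuclideanSpace ℝ (Fin d)) :
    sInf {v : ℝ | ∃ (x : Fin K → EuclideanSpace ℝ (Fin d)) (w : Fin K → ℝ)
        (P : Matrix (Fin K) (Fin N) ℝ),
      (∀ k, 0 ≤ w k) ∧ (∑ k, w k = 1) ∧
      (∀ k j, 0 ≤ P k j) ∧ (∀ k, ∑ j, P k j = w k) ∧
      (∀ j, ∑ k, P k j = 1 / (N : ℝ)) ∧
      v = ∑ k, ∑ j, P k j * ‖x k - y j‖ ^ 2} =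
    sInf {v : ℝ | ∃ c : Fin K → EuclideanSpace ℝ (Fin d),
      v = (1 / (N : ℝ)) * ∑ j, ⨅ k, ‖y j - c k‖ ^ 2} := by
  have hNpos : (0 : ℝ) < (N : ℝ) := by exact_mod_cast hN
  set L := {v : ℝ | ∃ (x : Fin K → EuclideanSpace ℝ (Fin d)) (w : Fin K → ℝ)
        (P : Matrix (Fin K) (Fin N) ℝ),
      (∀ k, 0 ≤ w k) ∧ (∑ k, w k = 1) ∧
      (∀ k j, 0 ≤ P k j) ∧ (∀ k, ∑ j, P k j = w k) ∧
      (∀ j, ∑ k, P k j = 1 / (N : ℝ)) ∧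
      v = ∑ k, ∑ j, P k j * ‖x k - y j‖ ^ 2} with hL
  set R := {v : ℝ | ∃ c : Fin K → EuclideanSpace ℝ (Fin d),
      v = (1 / (N : ℝ)) * ∑ j, ⨅ k, ‖y j - c k‖ ^ 2} with hR
  -- R ⊆ L
  have hsub : R ⊆ L := by
    rintro v ⟨c, rfl⟩
    choose k₀ hk₀ hk₀min using fun j => exists_min_fin (fun k => ‖y j - c k‖ ^ 2)
    refine ⟨c, fun k => ∑ j, (if k = k₀ j then (1 / (N : ℝ)) else 0),
      fun k j => if k = k₀ j then (1 / (N : ℝ)) else 0, ?_, ?_, ?_, fun k => rfl, ?_, ?_⟩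
    · intro k
      exact Finset.sum_nonneg fun j _ => by positivity
    · rw [Finset.sum_comm]
      have : ∀ j : Fin N, ∑ k, (if k = k₀ j then (1 / (N : ℝ)) else 0) = 1 / (N : ℝ) := by
        intro j; simp [Finset.sum_ite_eq']
      simp only [this]
      rw [Finset.sum_const, Finset.card_univ, Fintype.card_fin, nsmul_eq_mul, mul_one_div_cancel hNpos.ne']
    · intro k j; positivity
    · intro j; simp [Finset.sum_ite_eq']
    · rw [Finset.sum_comm, Finset.mul_sum]
      refine Finset.sum_congr rfl fun j _ => ?_
      have : ∀ k : Fin K, (if k = k₀ j then (1 / (N : ℝ)) else 0) * ‖c k - y j‖ ^ 2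
          = if k = k₀ j then (1 / (N : ℝ)) * ‖c (k₀ j) - y j‖ ^ 2 else 0 := by
        intro k; split <;> simp_all
      rw [Finset.sum_congr rfl fun k _ => this k, Finset.sum_ite_eq', if_pos (Finset.mem_univ _),
        hk₀ j, norm_sub_rev]
  -- both nonempty and bdd below
  have hRne : R.Nonempty := ⟨_, fun _ => 0, rfl⟩
  have hLne : L.Nonempty := ⟨_, hsub hRne.some_mem⟩
  have hRbdd : BddBelow R := by
    refine ⟨0, ?_⟩
    rintro v ⟨c, rfl⟩
    have : ∀ j : Fin N, (0:ℝ) ≤ ⨅ k, ‖y j - c k‖ ^ 2 :=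
      fun j => le_ciInf fun k => by positivity
    have := Finset.sum_nonneg fun j (_ : j ∈ Finset.univ) => this j
    positivity
  have hLbdd : BddBelow L := by
    refine ⟨0, ?_⟩
    rintro v ⟨x, w, P, hw0, hw1, hP0, hPw, hPN, rfl⟩
    exact Finset.sum_nonneg fun k _ => Finset.sum_nonneg fun j _ => by
      have := hP0 k j; positivity
  refine le_antisymm (csInf_le_csInf hLbdd hRne hsub) (le_csInf hLne ?_)
  rintro v ⟨x, w, P, hw0, hw1, hP0, hPw, hPN, rfl⟩
  have key : (1 / (N : ℝ)) * ∑ j, ⨅ k, ‖y j - x k‖ ^ 2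
      ≤ ∑ k, ∑ j, P k j * ‖x k - y j‖ ^ 2 := by
    rw [Finset.sum_comm]
    have : ∀ j : Fin N, (1 / (N : ℝ)) * (⨅ k, ‖y j - x k‖ ^ 2)
        ≤ ∑ k, P k j * ‖x k - y j‖ ^ 2 := by
      intro j
      calc (1 / (N : ℝ)) * (⨅ k, ‖y j - x k‖ ^ 2)
          = ∑ k, P k j * (⨅ k', ‖y j - x k'‖ ^ 2) := by
            rw [← Finset.sum_mul, hPN j]
        _ ≤ ∑ k, P k j * ‖x k - y j‖ ^ 2 := by
            refine Finset.sum_le_sum fun k _ => ?_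
            refine mul_le_mul_of_nonneg_left ?_ (hP0 k j)
            rw [norm_sub_rev (x k)]
            exact ciInf_le (Finite.bddBelow_range _) k
    calc (1 / (N : ℝ)) * ∑ j, ⨅ k, ‖y j - x k‖ ^ 2
        = ∑ j, (1 / (N : ℝ)) * (⨅ k, ‖y j - x k‖ ^ 2) := Finset.mul_sum _ _ _
      _ ≤ ∑ j, ∑ k, P k j * ‖x k - y j‖ ^ 2 := Finset.sum_le_sum fun j _ => this j
  exact le_trans (csInf_le hRbdd ⟨x, rfl⟩) key
end
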